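/- For each odd integer k ≥ 3, the graph B_k satisfies cms(B_k) ≤ (k−1)/2, and the matching number of B_k equals (k+1)/2. -/

import Mathlib

open SimpleGraph

/-- Two edges are adjacent if they are distinct and share a vertex. -/
def EdgesAdj {V : Type*} (e e' : Sym2 V) : Prop :=
  e ≠ e' ∧ ∃ v : V, v ∈ e ∧ v ∈ e'

/-- `ms` of an ordering of a graph, the ordering being given as the list of edges
in increasing label order: the largest `s ∈ {1,…,m}` such that any ordered pair of
adjacent edges `(e,e')` with `ℓ(e) < ℓ(e')` has forward distance at least `s`. -/
noncomputable def msList {V : Type*} (L : List (Sym2 V)) : ℕ :=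
  sSup {s | 1 ≤ s ∧ s ≤ L.length ∧ ∀ i j e e', i < j →
    L[i]? = some e → L[j]? = some e' → EdgesAdj e e' → s ≤ j - i}

/-- `cms` of an ordering of a graph: the largest `s ∈ {1,…,m}` such that every pair of
adjacent edges is at cyclic distance at least `s`. -/
noncomputable def cmsList {V : Type*} (L : List (Sym2 V)) : ℕ :=
  sSup {s | 1 ≤ s ∧ s ≤ L.length ∧ ∀ i j e e', i < j →
    L[i]? = some e → L[j]? = some e' → EdgesAdj e e' →
    s ≤ min (j - i) (L.length - (j - i))}

/-- `L` is an ordering of `G`: it lists every edge of `G` exactly once. -/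
def IsOrdering {V : Type*} (G : SimpleGraph V) (L : List (Sym2 V)) : Prop :=
  L.Nodup ∧ ∀ e, e ∈ L ↔ e ∈ G.edgeSet

/-- Cyclic matching sequenceability of a graph: the maximum of `cmsList` over orderings. -/
noncomputable def cms {V : Type*} (G : SimpleGraph V) : ℕ :=
  sSup {k | ∃ L, IsOrdering G L ∧ cmsList L = k}

/-- Number of edges of a graph. -/
noncomputable def numEdges {V : Type*} (G : SimpleGraph V) : ℕ :=
  Nat.card G.edgeSet

/-- The chromatic index: the least number of colours in a proper edge colouring. -/
noncomputable def chromaticIndex {V : Type*} (G : SimpleGraph V) : ℕ :=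
  sInf {c | ∃ f : G.edgeSet → Fin c, ∀ e e' : G.edgeSet, EdgesAdj e.1 e'.1 → f e ≠ f e'}

/-- The edge set of `G` forms a matching (no two distinct edges share a vertex). -/
def IsMatchingGraph {V : Type*} (G : SimpleGraph V) : Prop :=
  ∀ e ∈ G.edgeSet, ∀ e' ∈ G.edgeSet, ¬ EdgesAdj e e'

/-- `G` is regular of degree `d`. -/
def IsRegularGraph {V : Type*} (G : SimpleGraph V) (d : ℕ) : Prop :=
  ∀ v : V, Nat.card (G.neighborSet v) = d

/-- A finite set of edges of `G` forming a matching. -/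
def IsMatchingSet {V : Type*} (G : SimpleGraph V) (M : Finset (Sym2 V)) : Prop :=
  ↑M ⊆ G.edgeSet ∧ ∀ e ∈ M, ∀ e' ∈ M, ¬ EdgesAdj e e'

/-- The matching number of a graph. -/
noncomputable def matchingNumber {V : Type*} (G : SimpleGraph V) : ℕ :=
  sSup {k | ∃ M : Finset (Sym2 V), IsMatchingSet G M ∧ M.card = k}
/-- Adjacency in the complement of `B_k` for odd `k`: the path `0-1-2` together with the
perfect matching `{3,4}, {5,6}, …, {k, k+1}` on the remaining `k-1` vertices. -/
def compAdjB (a b : ℕ) : Prop :=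
  (min a b = 0 ∧ max a b = 1) ∨ (min a b = 1 ∧ max a b = 2) ∨
  (3 ≤ min a b ∧ Odd (min a b) ∧ max a b = min a b + 1)

/-- The graph `B_k`: for even `k` it is the complete graph on `k+1` vertices; for odd `k`
it is the graph on `k+2` vertices whose complement is the vertex-disjoint union of a path
with 3 vertices and a perfect matching on the remaining `k-1` vertices. -/
def BGraph (k : ℕ) : SimpleGraph (Fin (k + 1 + k % 2)) where
  Adj i j := i ≠ j ∧ (k % 2 = 1 → ¬ compAdjB i.val j.val)
  symm := ⟨by
    rintro i j ⟨hne, h⟩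
    refine ⟨hne.symm, fun hk1 hc => h hk1 ?_⟩
    unfold compAdjB at hc ⊢
    rwa [min_comm, max_comm]⟩
  loopless := ⟨fun i h => h.1 rfl⟩
lemma compAdjB_iff {x y : ℕ} : compAdjB x y ↔
    ((x = 0 ∧ y = 1) ∨ (x = 1 ∧ y = 0) ∨ (x = 1 ∧ y = 2) ∨ (x = 2 ∧ y = 1) ∨
     (3 ≤ x ∧ x % 2 = 1 ∧ y = x + 1) ∨ (3 ≤ y ∧ y % 2 = 1 ∧ x = y + 1)) := by
  unfold compAdjB
  rw [Nat.odd_iff]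
  omega


lemma bAdj_iff {k : ℕ} (h2 : k % 2 = 1) {i j : Fin (k+1+k%2)} :
    (BGraph k).Adj i j ↔ i ≠ j ∧ ¬ compAdjB i.val j.val := by
  constructor
  · rintro ⟨h1, h⟩; exact ⟨h1, h h2⟩
  · rintro ⟨h1, h⟩; exact ⟨h1, fun _ => h⟩


lemma EdgesAdj.symm' {V : Type*} {e e' : Sym2 V} (h : EdgesAdj e e') : EdgesAdj e' e := by
  obtain ⟨h1, v, hv, hv'⟩ := h
  exact ⟨h1.symm, v, hv', hv⟩


open scoped Classical in
open Finset in
lemma degree_lower {k : ℕ} (h2 : k % 2 = 1) (hk : 3 ≤ k) (v : Fin (k+1+k%2)) :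
    (if v.val = 1 then k - 1 else k) ≤ (BGraph k).degree v := by
  classical
  have hcardV : Fintype.card (Fin (k+1+k%2)) = k + 2 := by simp; omega
  have hdeg : (BGraph k).degree v = (univ.filter ((BGraph k).Adj v)).card := by
    rw [← neighborFinset_eq_filter]; congr 1
  have hsplit := Finset.card_filter_add_card_filter_not
    (s := (univ : Finset (Fin (k+1+k%2)))) ((BGraph k).Adj v)
  rw [Finset.card_univ, hcardV] at hsplit
  set N := univ.filter (fun j => ¬ (BGraph k).Adj v j) with hN
  have hNsub : ∀ j ∈ N, j = v ∨ compAdjB v.val j.val := by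
    intro j hj
    simp only [hN, Finset.mem_filter] at hj
    rw [bAdj_iff h2] at hj
    rcases hj with ⟨-, hj⟩
    by_cases h : j = v
    · exact Or.inl h
    · right
      by_contra hc
      exact hj ⟨fun he => h he.symm, hc⟩
  have hNcard : N.card ≤ (if v.val = 1 then 3 else 2) := by
    by_cases hv1 : v.val = 1
    · simp only [hv1, if_true]
      have hsub : N ⊆ {v, ⟨0, by omega⟩, ⟨2, by omega⟩} := by
        intro j hj
        rcases hNsub j hj with h | h
        · simp [h]
        · rw [hv1, compAdjB_iff] at h
          simp only [Finset.mem_insert, Finset.mem_singleton]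
          have : j.val = 0 ∨ j.val = 2 := by omega
          rcases this with h' | h'
          · right; left; exact Fin.ext h'
          · right; right; exact Fin.ext h'
      calc N.card ≤ _ := Finset.card_le_card hsub
        _ ≤ (insert (⟨0, by omega⟩ : Fin (k+1+k%2)) ({⟨2, by omega⟩} : Finset (Fin (k+1+k%2)))).card + 1 :=
            Finset.card_insert_le _ _
        _ ≤ (({⟨2, by omega⟩} : Finset (Fin (k+1+k%2))).card + 1) + 1 :=
            Nat.add_le_add_right (Finset.card_insert_le _ _) 1
        _ = 3 := by simp
    · simp only [hv1, if_false]
      have hsub : N ⊆ insert v (univ.filter (fun j : Fin (k+1+k%2) => compAdjB v.val j.val)) := by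
        intro j hj
        rcases hNsub j hj with h | h
        · simp [h]
        · simp [Finset.mem_insert, h]
      have hf1 : (univ.filter (fun j : Fin (k+1+k%2) => compAdjB v.val j.val)).card ≤ 1 := by
        rw [Finset.card_le_one]
        intro a ha b hb
        simp only [Finset.mem_filter] at ha hb
        rw [compAdjB_iff] at ha hb
        apply Fin.ext
        omega
      calc N.card ≤ _ := Finset.card_le_card hsub
        _ ≤ _ + 1 := Finset.card_insert_le _ _
        _ ≤ 2 := by omega
  rw [hdeg]
  by_cases hv1 : v.val = 1 <;> simp only [hv1, if_true, if_false] at hNcard ⊢ <;> omega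

open scoped Classical in
open Finset in
lemma degree_one_le {k : ℕ} (h2 : k % 2 = 1) (hk : 3 ≤ k) (v : Fin (k+1+k%2))
    (hv : v.val = 1) : (BGraph k).degree v ≤ k - 1 := by
  classical
  have hcardV : Fintype.card (Fin (k+1+k%2)) = k + 2 := by simp; omega
  have hdeg : (BGraph k).degree v = (univ.filter ((BGraph k).Adj v)).card := by
    rw [← neighborFinset_eq_filter]; congr 1
  have hsub : univ.filter ((BGraph k).Adj v) ⊆
      univ \ ({⟨0, by omega⟩, ⟨1, by omega⟩, ⟨2, by omega⟩} : Finset (Fin (k+1+k%2))) := by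
    intro j hj
    simp only [Finset.mem_filter] at hj
    rw [bAdj_iff h2] at hj
    obtain ⟨hne, hnc⟩ := hj.2
    rw [Finset.mem_sdiff]
    refine ⟨Finset.mem_univ _, ?_⟩
    simp only [Finset.mem_insert, Finset.mem_singleton]
    rintro (rfl | rfl | rfl)
    · apply hnc; rw [compAdjB_iff]; simp [hv]
    · exact hne (Fin.ext (by simp only [hv, Fin.val_mk]))
    · apply hnc; rw [compAdjB_iff]; simp [hv]
  have hc3 : ({⟨0, by omega⟩, ⟨1, by omega⟩, ⟨2, by omega⟩} : Finset (Fin (k+1+k%2))).card = 3 := by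
    rw [Finset.card_insert_of_notMem, Finset.card_insert_of_notMem, Finset.card_singleton] <;>
      simp [Fin.ext_iff]
  calc (BGraph k).degree v = _ := hdeg
    _ ≤ (univ \ _).card := Finset.card_le_card hsub
    _ = k + 2 - 3 := by rw [Finset.card_sdiff_of_subset (Finset.subset_univ _), Finset.card_univ, hcardV, hc3]
    _ ≤ k - 1 := by omega

open scoped Classical in
open Finset in
lemma twice_edges {k : ℕ} (h2 : k % 2 = 1) (hk : 3 ≤ k) :
    k*k + 2*k ≤ 2 * (BGraph k).edgeFinset.card + 1 := by
  classical
  have hcardV : Fintype.card (Fin (k+1+k%2)) = k + 2 := by simp; omega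
  have hsum := SimpleGraph.sum_degrees_eq_twice_card_edges (BGraph k)
  have h1n : (1:ℕ) < k+1+k%2 := by omega
  set one : Fin (k+1+k%2) := ⟨1, h1n⟩ with hone
  have hsplit : ∑ v : Fin (k+1+k%2), (BGraph k).degree v
      = (BGraph k).degree one + ∑ v ∈ univ.erase one, (BGraph k).degree v :=
    (Finset.add_sum_erase _ _ (Finset.mem_univ one)).symm
  have hcarde : (univ.erase one).card = k + 1 := by
    rw [Finset.card_erase_of_mem (Finset.mem_univ _), Finset.card_univ, hcardV]
    omega
  have hrest : (univ.erase one).card * k ≤ ∑ v ∈ univ.erase one, (BGraph k).degree v := by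
    apply Finset.card_nsmul_le_sum
    intro v hv
    have hv1 : v.val ≠ 1 := by
      intro h
      exact (Finset.mem_erase.mp hv).1 (Fin.ext (by simp only [h, hone, Fin.val_mk]))
    have := degree_lower h2 hk v
    rwa [if_neg hv1] at this
  rw [hcarde] at hrest
  have hone' : k ≤ (BGraph k).degree one + 1 := by
    have := degree_lower h2 hk one
    rw [if_pos (by simp only [hone, Fin.val_mk])] at this
    omega
  have hkk : (k+1)*k = k*k + k := by ring
  linarith [hsum, hsplit, hrest, hone', hkk]

/-- vertex set of an edge as a Finset -/
def edgeVerts {V : Type*} [DecidableEq V] (e : Sym2 V) : Finset V :=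
  Sym2.lift ⟨fun x y => {x, y}, fun x y => Finset.pair_comm x y⟩ e

lemma mem_edgeVerts {V : Type*} [DecidableEq V] {e : Sym2 V} {v : V} :
    v ∈ edgeVerts e ↔ v ∈ e := by
  induction e using Sym2.ind with
  | _ x y => simp [edgeVerts, Sym2.mem_iff]

lemma card_edgeVerts {V : Type*} [DecidableEq V] {e : Sym2 V} (h : ¬ e.IsDiag) :
    (edgeVerts e).card = 2 := by
  induction e using Sym2.ind with
  | _ x y =>
    rw [Sym2.mk_isDiag_iff] at h
    simp [edgeVerts, Finset.card_insert_of_notMem, h]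

lemma sym2_eq_of_mem {V : Type*} {x y : V} (hne : x ≠ y) {e : Sym2 V}
    (hx : x ∈ e) (hy : y ∈ e) : e = s(x, y) := by
  induction e using Sym2.ind with
  | _ c d =>
    rw [Sym2.mem_iff] at hx hy
    rcases hx with rfl | rfl <;> rcases hy with rfl | rfl
    · exact absurd rfl hne
    · rfl
    · exact Sym2.eq_swap
    · exact absurd rfl hne

open Finset in
lemma no_good (k : ℕ) (hk : 3 ≤ k) (h2 : k % 2 = 1)
    (L : List (Sym2 (Fin (k + 1 + k % 2))))
    (hnd : L.Nodup) (hmem : ∀ e, e ∈ L ↔ e ∈ (BGraph k).edgeSet)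
    (hcond : ∀ i j e e', i < j → L[i]? = some e → L[j]? = some e' → EdgesAdj e e' →
      (k+1)/2 ≤ min (j - i) (L.length - (j - i))) : False := by
  classical
  set s : ℕ := (k+1)/2 with hsdef
  have hs2 : 2*s = k + 1 := by omega
  set m := L.length with hmdef
  -- edge count
  have hLfin : L.toFinset = (BGraph k).edgeFinset := by
    ext e
    rw [List.mem_toFinset, SimpleGraph.mem_edgeFinset]
    exact hmem e
  have hmcard : m = (BGraph k).edgeFinset.card := by
    rw [← hLfin, List.toFinset_card_of_nodup hnd]
  have hmlb : k*k + 2*k ≤ 2*m + 1 := by rw [hmcard]; exact twice_edges h2 hk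
  have hkk3 : 3*k ≤ k*k := Nat.mul_le_mul_right k hk
  have hm5k : 5*k ≤ 2*m + 1 := by linarith [hmlb, hkk3]
  have hmpos : 0 < m := by omega
  have hsm : s + 2 ≤ m := by omega
  -- the cyclic edge sequence
  have h0n : 0 < k + 1 + k % 2 := by omega
  set dflt : Sym2 (Fin (k+1+k%2)) := s(⟨0, h0n⟩, ⟨0, h0n⟩) with hdflt
  set E : ℕ → Sym2 (Fin (k+1+k%2)) := fun p => L.getD (p % m) dflt with hE
  have hmodlt : ∀ p : ℕ, p % m < m := fun p => Nat.mod_lt _ hmpos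
  have hEeq : ∀ q (hq : q < m), E q = L[q]'hq := by
    intro q hq
    show L.getD (q % m) dflt = _
    rw [Nat.mod_eq_of_lt hq]
    exact List.getD_eq_getElem L dflt hq
  have hEmod : ∀ p, E (p % m) = E p := by
    intro p
    show L.getD _ _ = L.getD _ _
    congr 1
    exact Nat.mod_mod_of_dvd p dvd_rfl
  have hEmem : ∀ p, E p ∈ (BGraph k).edgeSet := by
    intro p
    rw [← hmem, ← hEmod p, hEeq _ (hmodlt p)]
    exact List.getElem_mem _
  have hEper : ∀ p, E (p + m) = E p := by
    intro p; simp only [hE, Nat.add_mod_right]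
  -- basic mod helper
  have hmodsmall : ∀ x : ℕ, x < 2*m → x % m = x ∨ x % m + m = x := by
    intro x hx
    by_cases h : x < m
    · left; exact Nat.mod_eq_of_lt h
    · right
      rw [Nat.mod_eq_sub_mod (by omega), Nat.mod_eq_of_lt (by omega)]
      omega
  -- nodup: different residues give different edges
  have hL1 : ∀ a b : ℕ, a % m ≠ b % m → E a ≠ E b := by
    intro a b hab h
    rw [← hEmod a, ← hEmod b, hEeq _ (hmodlt a), hEeq _ (hmodlt b)] at h
    exact hab ((List.Nodup.getElem_inj_iff hnd).mp h)
  -- the cms condition, applied to explicit indices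
  have hdist : ∀ p q : ℕ, p < q → q < m → EdgesAdj (E p) (E q) →
      s ≤ min (q - p) (m - (q - p)) := by
    intro p q h1 h2' hadj
    rw [hEeq p (by omega), hEeq q h2'] at hadj
    exact hcond p q _ _ h1 (List.getElem?_eq_getElem (by omega)) (List.getElem?_eq_getElem h2') hadj
  have hEshift : ∀ p t : ℕ, E (p % m + t) = E (p + t) := by
    intro p t
    show L.getD _ _ = L.getD _ _
    congr 1
    conv_lhs => rw [Nat.add_mod]
    conv_rhs => rw [Nat.add_mod]
    rw [Nat.mod_mod_of_dvd p dvd_rfl]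
  -- no adjacency at small cyclic distance
  have hL2 : ∀ p t : ℕ, 1 ≤ t → t < s → ¬ EdgesAdj (E p) (E (p + t)) := by
    intro p t ht1 ht2 hadj
    have hap : (p % m) < m := hmodlt p
    have hwrap : ((p % m + t) % m) < m := hmodlt _
    rcases hmodsmall (p % m + t) (by omega) with hc | hc
    · have h5 := hdist (p % m) (p % m + t) (by omega) (by omega)
        (by rw [hEmod p, hEshift p t]; exact hadj)
      omega
    · have hx2 : E (p % m + t - m) = E (p % m + t) := by
        show L.getD _ _ = L.getD _ _
        congr 1
        rw [Nat.mod_eq_of_lt (show p % m + t - m < m by omega)]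
        omega
      have h5 := hdist (p % m + t - m) (p % m) (by omega) hap
        (by rw [hx2, hEshift p t, hEmod p]; exact hadj.symm')
      omega
  -- distinct edges at small positive cyclic distance (≤ s)
  have hL1' : ∀ p t : ℕ, 1 ≤ t → t ≤ s → E p ≠ E (p + t) := by
    intro p t ht1 ht2
    apply hL1
    have hmodeq : (p + t) % m = (p % m + t) % m := by
      conv_lhs => rw [Nat.add_mod]
      rw [Nat.mod_eq_of_lt (show t < m by omega)]
    rw [hmodeq]
    have hap := hmodlt p
    rcases hmodsmall (p % m + t) (by omega) with hc | hc <;> omega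
  -- disjointness within a window
  have hdisj : ∀ p t : ℕ, 1 ≤ t → t < s → ∀ v : Fin (k+1+k%2), v ∈ E p → v ∈ E (p+t) → False := by
    intro p t ht1 ht2 v hv hv'
    exact hL2 p t ht1 ht2 ⟨hL1' p t ht1 (by omega), v, hv, hv'⟩
  -- vertex 1
  have h1n : (1:ℕ) < k + 1 + k % 2 := by omega
  have hcardV : Fintype.card (Fin (k+1+k%2)) = k + 2 := by simp; omega
  set one : Fin (k+1+k%2) := ⟨1, h1n⟩ with hone
  set Miss : ℕ → Prop := fun i => ∀ t, t < s → one ∉ E (i + t) with hMissdef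
  have hMissper : ∀ i, Miss i → Miss (i + m) := by
    intro i h t ht
    rw [show i + m + t = (i + t) + m by omega, hEper]
    exact h t ht
  -- positions whose edge contains vertex one
  set P := (Finset.range m).filter (fun p => one ∈ E p) with hPdef
  have hP : P.card ≤ k - 1 := by
    have hinc : P.card ≤ ((BGraph k).incidenceFinset one).card := by
      apply Finset.card_le_card_of_injOn (fun p => E p)
      · intro p hp
        rw [Finset.mem_coe, Finset.mem_filter] at hp
        rw [Finset.mem_coe, SimpleGraph.mem_incidenceFinset]
        exact ⟨hEmem p, hp.2⟩
      · intro p hp q hq hpq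
        simp only [hPdef, Finset.coe_filter, Set.mem_setOf_eq, Finset.mem_range] at hp hq
        have hpq' : E p = E q := hpq
        rw [hEeq p hp.1, hEeq q hq.1] at hpq'
        exact (List.Nodup.getElem_inj_iff hnd).mp hpq'
    rw [SimpleGraph.card_incidenceFinset_eq_degree] at hinc
    exact le_trans hinc (degree_one_le h2 hk one rfl)
  -- Claim A: many windows miss vertex one
  set S := (Finset.range m).filter Miss with hSdef
  have hA : m ≤ (k-1) * s + S.card := by
    have hsplitA := Finset.card_filter_add_card_filter_not (s := Finset.range m) Miss
    rw [Finset.card_range] at hsplitA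
    have hNM : ((Finset.range m).filter (fun i => ¬ Miss i)).card ≤ (k-1) * s := by
      have hsub : (Finset.range m).filter (fun i => ¬ Miss i) ⊆
          P.biUnion (fun p => (Finset.range s).image (fun t => (p + (m - t)) % m)) := by
        intro i hi
        rw [Finset.mem_filter, Finset.mem_range] at hi
        obtain ⟨him, hnm⟩ := hi
        have hex : ∃ t, t < s ∧ one ∈ E (i + t) := by
          by_contra hno
          push_neg at hno
          exact hnm (fun t ht => hno t ht)
        obtain ⟨t, ht, hmemt⟩ := hex
        rw [Finset.mem_biUnion]
        refine ⟨(i + t) % m, ?_, ?_⟩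
        · rw [hPdef, Finset.mem_filter, Finset.mem_range]
          exact ⟨hmodlt _, by rw [hEmod]; exact hmemt⟩
        · rw [Finset.mem_image]
          refine ⟨t, Finset.mem_range.mpr ht, ?_⟩
          rw [Nat.mod_add_mod, show i + t + (m - t) = i + m by omega,
            Nat.add_mod_right, Nat.mod_eq_of_lt him]
      calc ((Finset.range m).filter (fun i => ¬ Miss i)).card
          ≤ _ := Finset.card_le_card hsub
        _ ≤ ∑ p ∈ P, ((Finset.range s).image (fun t => (p + (m - t)) % m)).card :=
            Finset.card_biUnion_le
        _ ≤ ∑ _p ∈ P, s := Finset.sum_le_sum (fun p _ => le_trans Finset.card_image_le (by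
              rw [Finset.card_range]))
        _ = P.card * s := by rw [Finset.sum_const, smul_eq_mul]
        _ ≤ (k-1) * s := Nat.mul_le_mul_right s hP
    linarith [hsplitA, hNM]
  -- Claim B: two windows missing vertex one are far apart
  have hB : ∀ i t : ℕ, 1 ≤ t → t ≤ s → Miss i → Miss (i + t) → False := by
    intro i t ht1 ht2 hMi hMj
    set j := i + t with hjdef
    set C : Finset (Fin (k+1+k%2)) := (Finset.range s).biUnion (fun u => edgeVerts (E (j + u)))
      with hCdef
    have hCdisj : ∀ u ∈ Finset.range s, ∀ u' ∈ Finset.range s, u ≠ u' →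
        Disjoint (edgeVerts (E (j+u))) (edgeVerts (E (j+u'))) := by
      intro u hu u' hu' hne
      rw [Finset.mem_range] at hu hu'
      rw [Finset.disjoint_left]
      intro v hv hv'
      rw [mem_edgeVerts] at hv hv'
      rcases Nat.lt_or_ge u u' with h | h
      · exact hdisj (j+u) (u'-u) (by omega) (by omega) v hv
          (by rw [show j+u+(u'-u) = j+u' by omega]; exact hv')
      · exact hdisj (j+u') (u-u') (by omega) (by omega) v hv'
          (by rw [show j+u'+(u-u') = j+u by omega]; exact hv)
    have hCcard : C.card = 2*s := by
      rw [hCdef, Finset.card_biUnion hCdisj,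
        Finset.sum_congr rfl (fun u _ =>
          card_edgeVerts ((BGraph k).not_isDiag_of_mem_edgeSet (hEmem (j+u)))),
        Finset.sum_const, Finset.card_range, smul_eq_mul]
      omega
    have honeC : one ∉ C := by
      rw [hCdef, Finset.mem_biUnion]
      rintro ⟨u, hu, hmemu⟩
      rw [Finset.mem_range] at hu
      rw [mem_edgeVerts] at hmemu
      exact hMj u hu hmemu
    have hCsub : C ⊆ Finset.univ.erase one := by
      intro v hv
      rw [Finset.mem_erase]
      exact ⟨fun h => honeC (h ▸ hv), Finset.mem_univ _⟩
    have hCeq : C = Finset.univ.erase one := by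
      apply Finset.eq_of_subset_of_card_le hCsub
      rw [Finset.card_erase_of_mem (Finset.mem_univ _), Finset.card_univ, hcardV, hCcard]
      omega
    -- the edge just before window j
    obtain ⟨⟨x, y⟩, hxy⟩ := Quot.exists_rep (E (i + (t-1)))
    have hxy' : E (i + (t-1)) = s(x, y) := hxy.symm
    have hxadj : (BGraph k).Adj x y := by
      rw [← SimpleGraph.mem_edgeSet, ← hxy']
      exact hEmem _
    have hne_xy : x ≠ y := hxadj.ne
    have hone_not : one ∉ E (i + (t-1)) := hMi (t-1) (by omega)
    have hx_ne : x ≠ one := fun h => hone_not (by rw [hxy', Sym2.mem_iff]; exact Or.inl h.symm)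
    have hy_ne : y ≠ one := fun h => hone_not (by rw [hxy', Sym2.mem_iff]; exact Or.inr h.symm)
    have hlast : ∀ z : Fin (k+1+k%2), z ∈ E (i + (t-1)) → z ≠ one → z ∈ E (j + (s-1)) := by
      intro z hz hzne
      have hzC : z ∈ C := by
        rw [hCeq, Finset.mem_erase]
        exact ⟨hzne, Finset.mem_univ _⟩
      rw [hCdef, Finset.mem_biUnion] at hzC
      obtain ⟨u, hu, hzu⟩ := hzC
      rw [Finset.mem_range] at hu
      rw [mem_edgeVerts] at hzu
      rcases Nat.lt_or_ge u (s-1) with h | h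
      · exact absurd hzu (fun hzu => hdisj (i + (t-1)) (u+1) (by omega) (by omega) z hz
          (by rw [show i + (t-1) + (u+1) = j + u by omega]; exact hzu))
      · rwa [show u = s - 1 by omega] at hzu
    have hxlast := hlast x (by rw [hxy', Sym2.mem_iff]; exact Or.inl rfl) hx_ne
    have hylast := hlast y (by rw [hxy', Sym2.mem_iff]; exact Or.inr rfl) hy_ne
    have heq2 : E (j + (s-1)) = s(x, y) := sym2_eq_of_mem hne_xy hxlast hylast
    have : E (i + (t-1)) ≠ E (i + (t-1) + s) := hL1' _ s (by omega) le_rfl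
    rw [hxy', show i + (t-1) + s = j + (s-1) by omega, heq2] at this
    exact this rfl
  -- pairs of positions in S are cyclically far apart
  have hSmem : ∀ i ∈ S, i < m ∧ Miss i := by
    intro i hi
    rw [hSdef, Finset.mem_filter, Finset.mem_range] at hi
    exact hi
  have hSpair : ∀ i ∈ S, ∀ i' ∈ S, i < i' → s < i' - i ∧ s < m - (i' - i) := by
    intro i hi i' hi' hlt
    obtain ⟨him, hMi⟩ := hSmem i hi
    obtain ⟨him', hMi'⟩ := hSmem i' hi'
    constructor
    · by_contra h
      exact hB i (i' - i) (by omega) (by omega) hMi (by rwa [show i + (i' - i) = i' by omega])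
    · by_contra h
      refine hB i' (m - (i' - i)) (by omega) (by omega) hMi' ?_
      rw [show i' + (m - (i' - i)) = i + m by omega]
      exact hMissper i hMi
  -- injectivity counting
  have hinjS : Set.InjOn (fun q : ℕ × ℕ => (q.1 + q.2) % m)
      ↑(S ×ˢ Finset.range (s+1)) := by
    rintro ⟨i, u⟩ h1 ⟨i', u'⟩ h1' heq
    simp only [Finset.coe_product, Set.mem_prod, Finset.mem_coe, Finset.mem_range] at h1 h1'
    obtain ⟨hiS, hu⟩ := h1
    obtain ⟨hiS', hu'⟩ := h1'
    obtain ⟨him, hMi⟩ := hSmem i hiS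
    obtain ⟨him', hMi'⟩ := hSmem i' hiS'
    simp only at heq
    rcases hmodsmall (i + u) (by omega) with hc1 | hc1 <;>
      rcases hmodsmall (i' + u') (by omega) with hc2 | hc2 <;>
    · rcases lt_trichotomy i i' with h | h | h
      · have := hSpair i hiS i' hiS' h
        omega
      · subst h
        have : u = u' := by omega
        subst this
        rfl
      · have := hSpair i' hiS' i hiS h
        omega
  have hScount : S.card * (s+1) ≤ m := by
    have h1 : ((S ×ˢ Finset.range (s+1)).image (fun q : ℕ × ℕ => (q.1 + q.2) % m)).card
        = S.card * (s+1) := by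
      rw [Finset.card_image_of_injOn hinjS, Finset.card_product, Finset.card_range]
    have h2' : ((S ×ˢ Finset.range (s+1)).image (fun q : ℕ × ℕ => (q.1 + q.2) % m)) ⊆
        Finset.range m := by
      intro z hz
      rw [Finset.mem_image] at hz
      obtain ⟨q, _, rfl⟩ := hz
      exact Finset.mem_range.mpr (hmodlt _)
    calc S.card * (s+1) = _ := h1.symm
      _ ≤ (Finset.range m).card := Finset.card_le_card h2'
      _ = m := Finset.card_range m
  -- final arithmetic contradiction
  set c := S.card with hc
  have hq1 : c * s + c ≤ m := by
    have hr : c * (s+1) = c * s + c := by ring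
    linarith [hScount, hr]
  have t1 : c * s ≤ (k-1) * s := by linarith [hq1, hA]
  have t2 : c ≤ k - 1 := Nat.le_of_mul_le_mul_right t1 (by omega)
  have t3 : m ≤ (k-1) * s + (k-1) := by linarith [hA, t2]
  have t4 : 2 * ((k-1) * s) = (k-1) * (k+1) := by
    rw [show 2 * ((k-1)*s) = (k-1) * (2*s) by ring, hs2]
  have t5 : (k-1) * (k+1) + (k+1) = k * (k+1) := by
    have hk1 : k - 1 + 1 = k := by omega
    calc (k-1) * (k+1) + (k+1) = ((k-1) + 1) * (k+1) := by ring
      _ = k * (k+1) := by rw [hk1]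
  have t6 : k * (k+1) = k*k + k := by ring
  have t0 : (k - 1) + 1 = k := by omega
  linarith [hmlb, t3, t4, t5, t6, t0]

lemma matching_le {k : ℕ} (h2 : k % 2 = 1) (hk : 3 ≤ k)
    (M : Finset (Sym2 (Fin (k+1+k%2)))) (hM : IsMatchingSet (BGraph k) M) :
    M.card ≤ (k+1)/2 := by
  classical
  have hcardV : Fintype.card (Fin (k+1+k%2)) = k + 2 := by simp; omega
  have hdisj : ∀ e ∈ M, ∀ e' ∈ M, e ≠ e' → Disjoint (edgeVerts e) (edgeVerts e') := by
    intro e he e' he' hne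
    rw [Finset.disjoint_left]
    intro v hv hv'
    rw [mem_edgeVerts] at hv hv'
    exact hM.2 e he e' he' ⟨hne, v, hv, hv'⟩
  have hBcard : (M.biUnion edgeVerts).card = M.card * 2 := by
    rw [Finset.card_biUnion hdisj,
      Finset.sum_congr rfl (fun e he =>
        card_edgeVerts ((BGraph k).not_isDiag_of_mem_edgeSet (hM.1 he))),
      Finset.sum_const, smul_eq_mul]
  have := Finset.card_le_univ (M.biUnion edgeVerts)
  rw [hcardV, hBcard] at this
  omega

lemma exists_matching {k : ℕ} (h2 : k % 2 = 1) (hk : 3 ≤ k) :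
    ∃ M : Finset (Sym2 (Fin (k+1+k%2))), IsMatchingSet (BGraph k) M ∧ M.card = (k+1)/2 := by
  classical
  set f : ℕ → Sym2 (Fin (k+1+k%2)) := fun j =>
    if h : j < (k+1)/2 then
      s((⟨if j ≤ 1 then j else 2*j, by split <;> omega⟩ : Fin (k+1+k%2)),
        (⟨if j ≤ 1 then j+2 else 2*j+1, by split <;> omega⟩ : Fin (k+1+k%2)))
    else s(⟨0, by omega⟩, ⟨0, by omega⟩) with hf
  have hvmem : ∀ j, j < (k+1)/2 → ∀ v : Fin (k+1+k%2), v ∈ f j →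
      (v.val = (if j ≤ 1 then j else 2*j) ∨ v.val = (if j ≤ 1 then j+2 else 2*j+1)) := by
    intro j hj v hv
    rw [hf] at hv
    simp only [dif_pos hj, Sym2.mem_iff] at hv
    rcases hv with rfl | rfl
    · left; rfl
    · right; rfl
  have hedge : ∀ j, j < (k+1)/2 → f j ∈ (BGraph k).edgeSet := by
    intro j hj
    rw [hf]
    simp only [dif_pos hj]
    rw [SimpleGraph.mem_edgeSet, bAdj_iff h2]
    constructor
    · intro hc
      rw [Fin.ext_iff] at hc
      simp only [Fin.val_mk] at hc
      by_cases hj1 : j ≤ 1 <;> simp [hj1] at hc <;> omega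
    · rw [compAdjB_iff]
      simp only [Fin.val_mk]
      by_cases hj1 : j ≤ 1 <;> simp [hj1] <;> omega
  have hpair : ∀ j, j < (k+1)/2 → ∀ j', j' < (k+1)/2 → ∀ v : Fin (k+1+k%2),
      v ∈ f j → v ∈ f j' → j = j' := by
    intro j hj j' hj' v hv hv'
    have h1 := hvmem j hj v hv
    have h2' := hvmem j' hj' v hv'
    by_cases ha : j ≤ 1 <;> by_cases hb : j' ≤ 1 <;>
      simp [ha, hb] at h1 h2' <;> omega
  refine ⟨(Finset.range ((k+1)/2)).image f, ⟨?_, ?_⟩, ?_⟩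
  · intro e he
    rw [Finset.mem_coe, Finset.mem_image] at he
    obtain ⟨j, hj, rfl⟩ := he
    exact hedge j (Finset.mem_range.mp hj)
  · intro e he e' he' hadj
    rw [Finset.mem_image] at he he'
    obtain ⟨j, hj, rfl⟩ := he
    obtain ⟨j', hj', rfl⟩ := he'
    rw [Finset.mem_range] at hj hj'
    obtain ⟨hne, v, hv, hv'⟩ := hadj
    exact hne (by rw [hpair j hj j' hj' v hv hv'])
  · rw [Finset.card_image_of_injOn, Finset.card_range]
    intro j hj j' hj' heq
    rw [Finset.mem_coe, Finset.mem_range] at hj hj'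
    have hx : (⟨if j ≤ 1 then j else 2*j, by split <;> omega⟩ : Fin (k+1+k%2)) ∈ f j := by
      rw [hf]; simp [dif_pos hj, Sym2.mem_iff]
    exact hpair j hj j' hj' _ hx (heq ▸ hx)


/-- Lemma: for each odd `k ≥ 3`, `cms(B_k) ≤ (k-1)/2` and the matching number of `B_k`
is `(k+1)/2`. -/
theorem cms_BGraph_le_and_matchingNumber (k : ℕ) (hk : 3 ≤ k) (hodd : Odd k) :
    cms (BGraph k) ≤ (k - 1) / 2 ∧ matchingNumber (BGraph k) = (k + 1) / 2 := by
  have h2 : k % 2 = 1 := Nat.odd_iff.mp hodd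
  constructor
  · apply csSup_le'
    rintro c ⟨L, ⟨hnd, hmem⟩, rfl⟩
    apply csSup_le'
    rintro x ⟨hx1, hx2, hx3⟩
    by_contra hgt
    push_neg at hgt
    apply no_good k hk h2 L hnd hmem
    intro i j e e' hij he he' hadj
    have hmin := hx3 i j e e' hij he he' hadj
    have hxk : (k+1)/2 ≤ x := by omega
    omega
  · apply le_antisymm
    · apply csSup_le'
      rintro c ⟨M, hM, rfl⟩
      exact matching_le h2 hk M hM
    · apply le_csSup
      · exact ⟨(k+1)/2, by rintro c ⟨M', hM', rfl⟩; exact matching_le h2 hk M' hM'⟩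
      · obtain ⟨M, hM, hcard⟩ := exists_matching h2 hk
        exact ⟨M, hM, hcard⟩
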